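/- If (M,d) is a proper metric space (closed bounded sets are compact), then ε ↦ V_ε(f,T) is right-continuous on (0,∞): V_ε(f,T) = lim_{ε'→ε⁺} V_{ε'}(f,T). -/

import Mathlib

open Filter Set
open scoped ENNReal Topology

/-- The approximate (ε-)variation: infimum of Jordan variations of functions of
bounded variation uniformly ε-close to `f` on `T` (⊤ if no such function). -/
noncomputable def approxVar {M : Type*} [MetricSpace M] (f : ℝ → M) (T : Set ℝ) (ε : ℝ) : ℝ≥0∞ :=
  ⨅ (g : ℝ → M) (_ : eVariationOn g T ≠ ⊤ ∧ ∀ t ∈ T, dist (f t) (g t) ≤ ε),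
    eVariationOn g T

/-- The oscillation (diameter of the image) of `f` on `T`, valued in `[0,∞]`. -/
noncomputable def oscOn {M : Type*} [MetricSpace M] (f : ℝ → M) (T : Set ℝ) : ℝ≥0∞ :=
  ⨆ s ∈ T, ⨆ t ∈ T, edist (f s) (f t)

lemma approxVar_antitone {M : Type*} [MetricSpace M] (f : ℝ → M) (T : Set ℝ) :
    Antitone (approxVar f T) := by
  intro a b hab
  refine le_iInf₂ fun g hg => ?_
  exact iInf₂_le g ⟨hg.1, fun t ht => (hg.2 t ht).trans hab⟩

lemma approxVar_le_sSup {M : Type*} [MetricSpace M] [ProperSpace M]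
    (f : ℝ → M) (T : Set ℝ) {ε : ℝ} (hε : 0 < ε) :
    approxVar f T ε ≤ sSup (approxVar f T '' Ioi ε) := by
  set L := sSup (approxVar f T '' Ioi ε) with hLdef
  by_cases hL : L = ⊤
  · simp [hL]
  -- the auxiliary small quantities
  set δ : ℕ → ℝ≥0∞ := fun n => ENNReal.ofReal ((n + 1 : ℝ)⁻¹) with hδdef
  have hδpos : ∀ n, 0 < δ n := fun n => by
    simp [hδdef, ENNReal.ofReal_pos]
    positivity
  have hδ0 : Tendsto δ atTop (𝓝 0) := by
    have h1 : Tendsto (fun n : ℕ => ((n : ℝ) + 1)⁻¹) atTop (𝓝 0) := by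
      simpa [one_div] using tendsto_one_div_add_atTop_nhds_zero_nat (𝕜 := ℝ)
    simpa using (ENNReal.tendsto_ofReal h1)
  have hle : ∀ n : ℕ, approxVar f T (ε + ((n : ℝ) + 1)⁻¹) ≤ L := by
    intro n
    refine le_sSup ⟨ε + ((n : ℝ) + 1)⁻¹, ?_, rfl⟩
    have : (0 : ℝ) < ((n : ℝ) + 1)⁻¹ := by positivity
    simp [mem_Ioi]; linarith
  -- choose nearly optimal approximants
  have hex : ∀ n : ℕ, ∃ g : ℝ → M,
      (eVariationOn g T ≠ ⊤ ∧ ∀ t ∈ T, dist (f t) (g t) ≤ ε + ((n : ℝ) + 1)⁻¹) ∧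
      eVariationOn g T < L + δ n := by
    intro n
    have hlt : approxVar f T (ε + ((n : ℝ) + 1)⁻¹) < L + δ n :=
      lt_of_le_of_lt (hle n) (ENNReal.lt_add_right hL (hδpos n).ne')
    rw [approxVar, iInf_lt_iff] at hlt
    obtain ⟨g, hg⟩ := hlt
    rw [iInf_lt_iff] at hg
    obtain ⟨hp, hg⟩ := hg
    exact ⟨g, hp, hg⟩
  choose g hgP hgV using hex
  have hgd : ∀ n, ∀ t ∈ T, dist (f t) (g n t) ≤ ε + ((n : ℝ) + 1)⁻¹ := fun n => (hgP n).2
  -- an ultrafilter extending atTop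
  obtain ⟨u, hu⟩ := Ultrafilter.exists_le (atTop : Filter ℕ)
  -- ultrafilter limits exist in the compact balls
  have key : ∀ t : ℝ, ∃ x : M, t ∈ T → Tendsto (fun n => g n t) u (𝓝 x) := by
    intro t
    by_cases ht : t ∈ T
    · have hball : ∀ n, g n t ∈ Metric.closedBall (f t) (ε + 1) := by
        intro n
        rw [Metric.mem_closedBall, dist_comm]
        refine (hgd n t ht).trans (by
          have : ((n : ℝ) + 1)⁻¹ ≤ 1 := by
            rw [inv_le_one_iff₀]; right; linarith [Nat.cast_nonneg (α := ℝ) n]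
          linarith)
      have hcomp : IsCompact (Metric.closedBall (f t) (ε + 1)) :=
        isCompact_closedBall _ _
      obtain ⟨x, -, hx⟩ := hcomp.ultrafilter_le_nhds (u.map fun n => g n t)
        (by
          rw [Ultrafilter.coe_map, le_principal_iff, mem_map]
          exact univ_mem' hball)
      exact ⟨x, fun _ => by rw [Ultrafilter.coe_map] at hx; exact hx⟩
    · exact ⟨f t, fun h => absurd h ht⟩
  choose G hG using key
  -- the limit function is uniformly ε-close to f on T
  have hdist : ∀ t ∈ T, dist (f t) (G t) ≤ ε := by
    intro t ht
    have h1 : Tendsto (fun n => dist (f t) (g n t)) u (𝓝 (dist (f t) (G t))) :=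
      Tendsto.dist tendsto_const_nhds (hG t ht)
    have h2 : Tendsto (fun n : ℕ => ε + ((n : ℝ) + 1)⁻¹) u (𝓝 ε) := by
      have : Tendsto (fun n : ℕ => ε + ((n : ℝ) + 1)⁻¹) atTop (𝓝 (ε + 0)) := by
        refine Tendsto.const_add _ ?_
        simpa [one_div] using tendsto_one_div_add_atTop_nhds_zero_nat (𝕜 := ℝ)
      simpa using this.mono_left hu
    exact le_of_tendsto_of_tendsto' h1 h2 fun n => hgd n t ht
  -- the variation of the limit function is at most L
  have hvar : eVariationOn G T ≤ L := by
    rw [eVariationOn]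
    refine iSup_le ?_
    rintro ⟨m, v, hv, vT⟩
    have hS : Tendsto
        (fun n => ∑ i ∈ Finset.range m, edist (g n (v (i + 1))) (g n (v i))) u
        (𝓝 (∑ i ∈ Finset.range m, edist (G (v (i + 1))) (G (v i)))) := by
      refine tendsto_finset_sum _ fun i _ => ?_
      exact Tendsto.edist (hG _ (vT (i + 1))) (hG _ (vT i))
    have hB : Tendsto (fun n => L + δ n) u (𝓝 L) := by
      have : Tendsto (fun n => L + δ n) atTop (𝓝 (L + 0)) :=
        Tendsto.const_add _ hδ0
      simpa using this.mono_left hu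
    refine le_of_tendsto_of_tendsto' hS hB fun n => ?_
    calc ∑ i ∈ Finset.range m, edist (g n (v (i + 1))) (g n (v i))
        ≤ eVariationOn (g n) T := eVariationOn.sum_le hv vT
      _ ≤ L + δ n := (hgV n).le
  -- conclude
  refine le_trans ?_ hvar
  exact iInf₂_le G ⟨(lt_of_le_of_lt hvar (lt_top_iff_ne_top.mpr hL)).ne, hdist⟩

theorem approxVar_right_continuous {M : Type*} [MetricSpace M] [ProperSpace M]
    (f : ℝ → M) (T : Set ℝ) (hT : T.Nonempty) {ε : ℝ} (hε : 0 < ε) :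
    Tendsto (fun ε' => approxVar f T ε') (𝓝[>] ε) (𝓝 (approxVar f T ε)) := by
  have h := (approxVar_antitone f T).tendsto_nhdsGT ε
  have heq : sSup (approxVar f T '' Ioi ε) = approxVar f T ε := by
    refine le_antisymm ?_ (approxVar_le_sSup f T hε)
    refine sSup_le ?_
    rintro _ ⟨x, hx, rfl⟩
    exact approxVar_antitone f T (le_of_lt hx)
  rwa [heq] at h
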